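/- arXiv:1111.6362 — 8 statements merged into one kernel-verified Lean document; each statement's English description precedes it below -/
import Mathlib

section
/- For all real x ≥ 0 and all real a, m ≥ 1, one has (1 - 1/(1+x)^m)^a ≤ m·x / a^(1/m). -/
open Real

theorem stmt_0 (x a m : ℝ) (hx : 0 ≤ x) (ha : 1 ≤ a) (hm : 1 ≤ m) :
    (1 - 1 / (1 + x) ^ m) ^ a ≤ m * x / a ^ (1 / m) := by
  have ha0 : (0:ℝ) < a := lt_of_lt_of_le one_pos ha
  have hm0 : (0:ℝ) < m := lt_of_lt_of_le one_pos hm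
  have hc : (0:ℝ) < a ^ (1/m) := Real.rpow_pos_of_pos ha0 _
  rcases hx.eq_or_lt with h0 | hx'
  · rw [← h0]
    simp [Real.one_rpow, Real.zero_rpow (ne_of_gt ha0)]
  -- main case x > 0
  have h1x : (1:ℝ) < 1 + x := by linarith
  set s : ℝ := (1+x)⁻¹ with hs
  have hs0 : 0 < s := by positivity
  have hs1 : s < 1 := by
    rw [hs]
    exact inv_lt_one_of_one_lt₀ h1x
  have hweq : (1:ℝ)/(1+x)^m = s ^ m := by
    rw [one_div, hs, Real.inv_rpow (by linarith : (0:ℝ) ≤ 1+x)]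
  set w : ℝ := s ^ m with hwdef
  have hw0 : 0 < w := Real.rpow_pos_of_pos hs0 _
  have hw1 : w < 1 := Real.rpow_lt_one hs0.le hs1 hm0
  set t : ℝ := 1 - w with htdef
  have ht0 : 0 < t := by simp only [htdef]; linarith
  -- A : t ≤ m * (x * s)
  have hxs : 1 - s = x * s := by
    rw [hs]
    field_simp
    ring
  have hA : t ≤ m * (x * s) := by
    have hb : 1 + m * (s - 1) ≤ (1 + (s-1)) ^ m :=
      one_add_mul_self_le_rpow_one_add (by linarith) hm
    have he : 1 + (s-1) = s := by ring
    rw [he] at hb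
    have hms : m * (1 - s) = m * (x * s) := by rw [hxs]
    simp only [htdef, hwdef]
    nlinarith
  -- C : a * w * t ^ (m*(a-1)) ≤ 1
  have hC : a * w * t ^ (m*(a-1)) ≤ 1 := by
    set y := m * (a-1) with hy
    have hy0 : 0 ≤ y := by nlinarith
    have h1 : t ^ y ≤ exp (-w) ^ y :=
      Real.rpow_le_rpow ht0.le (Real.one_sub_le_exp_neg w) hy0
    have h2 : exp (-w) ^ y = exp (-(w*y)) := by
      rw [← Real.exp_mul]
      ring_nf
    have h3 : a * w ≤ 1 + y * w := by
      rw [hy]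
      nlinarith [mul_nonneg (mul_nonneg (sub_nonneg.2 hm) (sub_nonneg.2 ha)) hw0.le]
    have h4 : 1 + y * w ≤ exp (y*w) := by
      have := Real.add_one_le_exp (y*w)
      linarith
    have h5 : exp (y*w) * exp (-(w*y)) = 1 := by
      rw [← Real.exp_add]
      ring_nf
      exact Real.exp_zero
    calc a * w * t ^ y ≤ a * w * exp (-(w*y)) := by
          have := h1.trans_eq h2
          exact mul_le_mul_of_nonneg_left this (by positivity)
      _ ≤ (1 + y*w) * exp (-(w*y)) := mul_le_mul_of_nonneg_right h3 (Real.exp_pos _).le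
      _ ≤ exp (y*w) * exp (-(w*y)) := mul_le_mul_of_nonneg_right h4 (Real.exp_pos _).le
      _ = 1 := h5
  -- B : a^(1/m) * (s * t^(a-1)) ≤ 1
  have hB : a ^ (1/m) * (s * t ^ (a-1)) ≤ 1 := by
    have e1 : s = w ^ (1/m) := by
      rw [hwdef, ← Real.rpow_mul hs0.le, mul_one_div, div_self (ne_of_gt hm0), Real.rpow_one]
    have e2 : t ^ (a-1) = (t ^ (m*(a-1))) ^ (1/m) := by
      rw [← Real.rpow_mul ht0.le]
      congr 1
      field_simp
    have e3 : a ^ (1/m) * (s * t ^ (a-1)) = (a * w * t ^ (m*(a-1))) ^ (1/m) := by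
      rw [e2, Real.mul_rpow (by positivity) (by positivity),
        Real.mul_rpow (le_of_lt ha0) hw0.le, ← e1]
      ring
    rw [e3]
    calc (a * w * t ^ (m*(a-1))) ^ (1/m) ≤ 1 ^ (1/m) :=
          Real.rpow_le_rpow (by positivity) hC (by positivity)
      _ = 1 := Real.one_rpow _
  -- assemble
  have hteq : 1 - 1/(1+x)^m = t := by rw [hweq]
  rw [hteq, le_div_iff₀ hc]
  have hta : t ^ a = t ^ (a-1) * t := by
    have h := Real.rpow_add_one (ne_of_gt ht0) (a-1)
    have he : a - 1 + 1 = a := by ring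
    rw [he] at h
    exact h
  calc t ^ a * a ^ (1/m) = (t ^ (a-1) * a ^ (1/m)) * t := by rw [hta]; ring
    _ ≤ (t ^ (a-1) * a ^ (1/m)) * (m*(x*s)) :=
        mul_le_mul_of_nonneg_left hA (by positivity)
    _ = (a ^ (1/m) * (s * t ^ (a-1))) * (m*x) := by ring
    _ ≤ 1 * (m*x) := mul_le_mul_of_nonneg_right hB (by positivity)
    _ = m * x := one_mul _
end

section
/- For all real x ≥ 0 and all real a, m ≥ 1, one has (1 - 1/(1+x^2)^m)^a ≤ √m · x / (2a)^(1/(2m)). -/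
open Real

/-- AM-GM claim: `b * w * (1-w)^(b-1) ≤ 1` for `w ∈ [0,1]`, `b ≥ 1`. -/
lemma km_aux (w b : ℝ) (hw0 : 0 ≤ w) (hw1 : w ≤ 1) (hb : 1 ≤ b) :
    b * w * (1 - w) ^ (b - 1) ≤ 1 := by
  have hb0 : 0 < b := lt_of_lt_of_le one_pos hb
  rcases eq_or_lt_of_le hb with hb1 | hb1
  · rw [← hb1]
    simp [Real.rpow_zero]
    linarith
  rcases eq_or_lt_of_le hw1 with hw1' | hw1'
  · rw [hw1']
    rw [show (1:ℝ) - 1 = 0 by ring, Real.zero_rpow (by linarith)]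
    norm_num
  have h1w : 0 < 1 - w := by linarith
  have hbm1 : 0 < b - 1 := by linarith
  have h := Real.geom_mean_le_arith_mean2_weighted
    (w₁ := 1 / b) (w₂ := (b - 1) / b) (p₁ := b * w) (p₂ := b * (1 - w) / (b - 1))
    (by positivity) (by positivity) (by positivity) (by positivity)
    (by field_simp; ring)
  have hsum : (1 / b) * (b * w) + ((b - 1) / b) * (b * (1 - w) / (b - 1)) = 1 := by
    field_simp
    ring
  rw [hsum] at h
  -- raise to power b
  have h2 : ((b * w) ^ (1 / b) * (b * (1 - w) / (b - 1)) ^ ((b - 1) / b)) ^ b ≤ 1 ^ b :=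
    Real.rpow_le_rpow (by positivity) h (le_of_lt hb0)
  rw [Real.one_rpow, Real.mul_rpow (by positivity) (by positivity)] at h2
  rw [← Real.rpow_mul (by positivity), ← Real.rpow_mul (by positivity)] at h2
  rw [show 1 / b * b = 1 by field_simp, show (b - 1) / b * b = b - 1 by field_simp,
    Real.rpow_one] at h2
  -- (b*(1-w)/(b-1))^(b-1) = (b/(b-1))^(b-1) * (1-w)^(b-1) ≥ (1-w)^(b-1)
  have h3 : (1 - w) ^ (b - 1) ≤ (b * (1 - w) / (b - 1)) ^ (b - 1) := by
    apply Real.rpow_le_rpow h1w.le _ hbm1.le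
    rw [le_div_iff₀ hbm1]
    nlinarith
  calc b * w * (1 - w) ^ (b - 1)
      ≤ b * w * (b * (1 - w) / (b - 1)) ^ (b - 1) := by
        apply mul_le_mul_of_nonneg_left h3 (by positivity)
    _ ≤ 1 := h2

/-- Key inequality: `(1 - 1/(1+y)^m)^b ≤ m * y / b^(1/m)`. -/
lemma key_aux (y b m : ℝ) (hy : 0 ≤ y) (hb : 1 ≤ b) (hm : 1 ≤ m) :
    (1 - 1 / (1 + y) ^ m) ^ b ≤ m * y / b ^ (1 / m) := by
  have hb0 : 0 < b := lt_of_lt_of_le one_pos hb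
  have hm0 : 0 < m := lt_of_lt_of_le one_pos hm
  have h1y : 0 < 1 + y := by linarith
  have hP : 0 < (1 + y) ^ m := Real.rpow_pos_of_pos h1y m
  have hP1 : 1 ≤ (1 + y) ^ m := Real.one_le_rpow (by linarith) (by linarith)
  set s : ℝ := 1 / (1 + y) ^ m with hs
  have hs0 : 0 < s := by positivity
  have hs1 : s ≤ 1 := by
    rw [hs, div_le_one hP]; exact hP1
  have hc1 : 1 ≤ b ^ (1 / m) := Real.one_le_rpow hb (by positivity)
  have hc0 : 0 < b ^ (1 / m) := by positivity
  have hcm : (b ^ (1 / m)) ^ m = b := by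
    rw [← Real.rpow_mul hb0.le, one_div_mul_cancel hm0.ne', Real.rpow_one]
  -- Bernoulli: 1 - s ≤ m * y / (1 + y)
  have hbern : 1 - s ≤ m * y / (1 + y) := by
    have h := one_add_mul_self_le_rpow_one_add
      (s := 1 / (1 + y) - 1) (by
        have : 0 < 1 / (1 + y) := by positivity
        linarith) (p := m) hm
    have heq : ((1 : ℝ) + (1 / (1 + y) - 1)) = 1 / (1 + y) := by ring
    rw [heq] at h
    have hpow : (1 / (1 + y)) ^ m = s := by
      rw [hs, Real.div_rpow zero_le_one h1y.le, Real.one_rpow]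
    rw [hpow] at h
    have h2 : 1 / (1 + y) - 1 = -(y / (1 + y)) := by
      field_simp
      ring
    rw [h2] at h
    have : m * (y / (1 + y)) = m * y / (1 + y) := by ring
    linarith [h, this]
  rcases eq_or_lt_of_le hy with hy0 | hy0
  · have hs1' : s = 1 := by
      rw [hs, ← hy0]
      simp [Real.one_rpow]
    rw [hs1', ← hy0]
    simp [sub_self, Real.zero_rpow hb0.ne']
  -- y > 0
  have hP1' : 1 + y ≤ (1 + y) ^ m := by
    calc 1 + y = (1 + y) ^ (1 : ℝ) := (Real.rpow_one _).symm
    _ ≤ (1 + y) ^ m := Real.rpow_le_rpow_of_exponent_le (by linarith) hm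
  have hslt : s < 1 := by
    rw [hs, div_lt_one hP]
    linarith
  have h1s : 0 < 1 - s := by linarith
  have hfact : (1 - s) ^ b = (1 - s) ^ (b - 1) * (1 - s) := by
    rw [show b = b - 1 + 1 by ring, Real.rpow_add h1s, Real.rpow_one]
    ring_nf
  have hmy : 0 < m * y := by positivity
  rcases le_total (b ^ (1 / m)) (1 + y) with hcase | hcase
  · -- c ≤ 1 + y
    have h1 : (1 - s) ^ (b - 1) ≤ 1 :=
      Real.rpow_le_one h1s.le (by linarith) (by linarith)
    calc (1 - s) ^ b = (1 - s) ^ (b - 1) * (1 - s) := hfact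
      _ ≤ 1 * (m * y / (1 + y)) :=
        mul_le_mul h1 hbern h1s.le zero_le_one
      _ = m * y / (1 + y) := one_mul _
      _ ≤ m * y / b ^ (1 / m) := by
          apply div_le_div_of_nonneg_left hmy.le hc0 hcase
  · -- 1 + y ≤ c
    have hkm := km_aux s b hs0.le hs1 hb
    have h2 : (1 - s) ^ (b - 1) ≤ (1 + y) ^ m / b := by
      rw [le_div_iff₀ hb0]
      have hsP : s * (1 + y) ^ m = 1 := by
        rw [hs]; field_simp
      have h3 : b * s * (1 - s) ^ (b - 1) * (1 + y) ^ m = (1 - s) ^ (b - 1) * b := by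
        have h4 : b * s * (1 - s) ^ (b - 1) * (1 + y) ^ m
            = b * (1 - s) ^ (b - 1) * (s * (1 + y) ^ m) := by ring
        rw [h4, hsP]; ring
      linarith [mul_le_mul_of_nonneg_right hkm hP.le, h3]
    have hpow : (1 + y) ^ (m - 1) ≤ (b ^ (1 / m)) ^ (m - 1) :=
      Real.rpow_le_rpow h1y.le hcase (by linarith)
    have hPc : b ^ (1 / m) * (1 + y) ^ m ≤ b * (1 + y) := by
      have e1 : (1 + y) ^ m = (1 + y) ^ (m - 1) * (1 + y) := by
        rw [show m = m - 1 + 1 by ring, Real.rpow_add h1y, Real.rpow_one]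
        ring_nf
      have e2 : b ^ (1 / m) * (b ^ (1 / m)) ^ (m - 1) = b := by
        calc b ^ (1 / m) * (b ^ (1 / m)) ^ (m - 1)
            = (b ^ (1 / m)) ^ (1 : ℝ) * (b ^ (1 / m)) ^ (m - 1) := by
              rw [Real.rpow_one]
          _ = (b ^ (1 / m)) ^ (1 + (m - 1)) := (Real.rpow_add hc0 _ _).symm
          _ = (b ^ (1 / m)) ^ m := by ring_nf
          _ = b := hcm
      calc b ^ (1 / m) * (1 + y) ^ m
          = b ^ (1 / m) * ((1 + y) ^ (m - 1) * (1 + y)) := by rw [e1]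
        _ ≤ b ^ (1 / m) * ((b ^ (1 / m)) ^ (m - 1) * (1 + y)) := by
            apply mul_le_mul_of_nonneg_left _ hc0.le
            exact mul_le_mul_of_nonneg_right hpow h1y.le
        _ = (b ^ (1 / m) * (b ^ (1 / m)) ^ (m - 1)) * (1 + y) := by ring
        _ = b * (1 + y) := by rw [e2]
    calc (1 - s) ^ b = (1 - s) ^ (b - 1) * (1 - s) := hfact
      _ ≤ ((1 + y) ^ m / b) * (m * y / (1 + y)) :=
        mul_le_mul h2 hbern h1s.le (by positivity)
      _ ≤ m * y / b ^ (1 / m) := by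
          rw [div_mul_div_comm, div_le_div_iff₀ (by positivity) hc0]
          nlinarith

theorem stmt_1 (x a m : ℝ) (hx : 0 ≤ x) (ha : 1 ≤ a) (hm : 1 ≤ m) :
    (1 - 1 / (1 + x ^ 2) ^ m) ^ a ≤ Real.sqrt m * x / (2 * a) ^ (1 / (2 * m)) := by
  have hy : (0:ℝ) ≤ x ^ 2 := sq_nonneg x
  have hkey := key_aux (x ^ 2) (2 * a) m hy (by linarith) hm
  have hm0 : (0:ℝ) < m := by linarith
  have ha0 : (0:ℝ) < 2 * a := by linarith
  set L := (1 - 1 / (1 + x ^ 2) ^ m) ^ a with hL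
  set R := Real.sqrt m * x / (2 * a) ^ (1 / (2 * m)) with hR
  have hPx : (0:ℝ) < (1 + x ^ 2) ^ m := Real.rpow_pos_of_pos (by positivity) m
  have hbase : 0 ≤ 1 - 1 / (1 + x ^ 2) ^ m := by
    have h1 : (1:ℝ) ≤ (1 + x ^ 2) ^ m :=
      Real.one_le_rpow (by nlinarith [sq_nonneg x]) (by linarith)
    have h2 : 1 / (1 + x ^ 2) ^ m ≤ 1 := by
      rw [div_le_one hPx]; exact h1
    linarith
  have hL0 : 0 ≤ L := Real.rpow_nonneg hbase a
  have hR0 : 0 ≤ R := by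
    rw [hR]
    positivity
  have hL2 : L ^ 2 = (1 - 1 / (1 + x ^ 2) ^ m) ^ (2 * a) := by
    rw [hL, ← Real.rpow_natCast ((1 - 1 / (1 + x ^ 2) ^ m) ^ a) 2,
        ← Real.rpow_mul hbase]
    norm_num
    rw [mul_comm]
  have hR2 : R ^ 2 = m * x ^ 2 / (2 * a) ^ (1 / m) := by
    rw [hR, div_pow, mul_pow, Real.sq_sqrt (le_of_lt hm0),
        ← Real.rpow_natCast ((2 * a) ^ (1 / (2 * m))) 2, ← Real.rpow_mul ha0.le]
    norm_num
    congr 2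
    ring
  have h2 : L ^ 2 ≤ R ^ 2 := by rw [hL2, hR2]; exact hkey
  calc L = Real.sqrt (L ^ 2) := (Real.sqrt_sq hL0).symm
    _ ≤ Real.sqrt (R ^ 2) := Real.sqrt_le_sqrt h2
    _ = R := Real.sqrt_sq hR0
end

section
/- For all real x ≥ 0 and all real a ≥ 1, one has (x²/(1+x²))^a ≤ x/√(2a), and in particular (x²/(1+x²))^a ≤ x/√a. -/
theorem stmt_2 (x a : ℝ) (hx : 0 ≤ x) (ha : 1 ≤ a) :
    (x ^ 2 / (1 + x ^ 2)) ^ a ≤ x / Real.sqrt (2 * a) ∧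
    (x ^ 2 / (1 + x ^ 2)) ^ a ≤ x / Real.sqrt a := by
  have ha0 : (0:ℝ) < a := lt_of_lt_of_le one_pos ha
  have h2a : (0:ℝ) < 2 * a := by linarith
  have key : (x ^ 2 / (1 + x ^ 2)) ^ a ≤ x / Real.sqrt (2 * a) := by
    rcases eq_or_lt_of_le hx with h0 | hxpos
    · rw [← h0]
      simp [Real.zero_rpow (by positivity : a ≠ 0)]
    · have hx2 : (0:ℝ) < x ^ 2 := by positivity
      have hden : (0:ℝ) < 1 + x ^ 2 := by positivity
      set B : ℝ := (1 + x ^ 2) / x ^ 2 with hBdef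
      have hB1 : (1:ℝ) < B := by
        rw [hBdef, lt_div_iff₀ hx2]; linarith
      have hB0 : (0:ℝ) < B := lt_trans one_pos hB1
      -- Bernoulli: (1 + 1/x²)^(2a) ≥ 1 + 2a/x² ≥ 2a/x²
      have hBeq : B = 1 + 1 / x ^ 2 := by
        field_simp [hBdef]
        rw [hBdef, div_mul_cancel₀ _ hx2.ne']
        ring
      have hbern : 1 + (2 * a) * (1 / x ^ 2) ≤ (1 + 1 / x ^ 2) ^ (2 * a) :=
        one_add_mul_self_le_rpow_one_add
          (le_trans (by norm_num) (by positivity : (0:ℝ) ≤ 1 / x ^ 2)) (by linarith)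
      have h1 : 2 * a / x ^ 2 ≤ B ^ (2 * a) := by
        rw [hBeq]
        calc 2 * a / x ^ 2 ≤ 1 + (2 * a) * (1 / x ^ 2) := by
              rw [mul_one_div]; linarith [le_of_lt h2a]
          _ ≤ _ := hbern
      -- take square roots
      have h2 : Real.sqrt (2 * a) / x ≤ B ^ a := by
        have hs := Real.sqrt_le_sqrt h1
        have e1 : Real.sqrt (2 * a / x ^ 2) = Real.sqrt (2 * a) / x := by
          rw [Real.sqrt_div h2a.le, Real.sqrt_sq hx]
        have e2 : Real.sqrt (B ^ (2 * a)) = B ^ a := by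
          rw [Real.sqrt_eq_rpow, ← Real.rpow_mul hB0.le, show 2 * a * (1 / 2) = a by ring]
        rwa [e1, e2] at hs
      -- invert
      have hrhs : 0 < Real.sqrt (2 * a) / x := div_pos (Real.sqrt_pos.mpr h2a) hxpos
      have hinv : (B ^ a)⁻¹ ≤ (Real.sqrt (2 * a) / x)⁻¹ :=
        inv_anti₀ hrhs h2
      have hLHS : (x ^ 2 / (1 + x ^ 2)) ^ a = (B ^ a)⁻¹ := by
        rw [show x ^ 2 / (1 + x ^ 2) = B⁻¹ by rw [hBdef, inv_div],
          Real.inv_rpow hB0.le]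
      rw [hLHS]
      rwa [inv_div] at hinv
  refine ⟨key, key.trans ?_⟩
  have : Real.sqrt a ≤ Real.sqrt (2 * a) := Real.sqrt_le_sqrt (by linarith)
  gcongr
end

section
/- For every real x ≥ 0 and every integer n ≥ 1, |(1 + x/n)^(−n) − e^(−x)| ≤ 2/n. -/
set_option maxHeartbeats 1000000 in
lemma aux_binom (t : ℝ) (ht : 0 ≤ t) (n : ℕ) :
    1 + n * t + n * (n - 1) / 2 * t ^ 2 + n * (n - 1) * (n - 2) / 6 * t ^ 3 ≤ (1 + t) ^ n := by
  induction n with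
  | zero => norm_num
  | succ m ih =>
    have h1 : (0:ℝ) ≤ 1 + t := by linarith
    have h2 : (1 + t) * (1 + m * t + m * (m - 1) / 2 * t ^ 2 + m * (m - 1) * (m - 2) / 6 * t ^ 3)
        ≤ (1 + t) * (1 + t) ^ m := mul_le_mul_of_nonneg_left ih h1
    have h3 : (0:ℝ) ≤ (m:ℝ) * ((m:ℝ) - 1) * ((m:ℝ) - 2) := by
      rcases Nat.lt_or_ge m 3 with hm | hm
      · interval_cases m <;> norm_num
      · have hm3 : (3:ℝ) ≤ (m:ℝ) := by exact_mod_cast hm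
        have : (0:ℝ) ≤ (m:ℝ) := by linarith
        apply mul_nonneg (mul_nonneg this (by linarith)) (by linarith)
    have h4 : (0:ℝ) ≤ t ^ 4 := by positivity
    have key : (1 + t) * (1 + (m:ℝ) * t + (m:ℝ) * ((m:ℝ) - 1) / 2 * t ^ 2
          + (m:ℝ) * ((m:ℝ) - 1) * ((m:ℝ) - 2) / 6 * t ^ 3)
        = (1 + ((m:ℝ) + 1) * t + ((m:ℝ) + 1) * (((m:ℝ) + 1) - 1) / 2 * t ^ 2
          + ((m:ℝ) + 1) * (((m:ℝ) + 1) - 1) * (((m:ℝ) + 1) - 2) / 6 * t ^ 3)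
          + (m:ℝ) * ((m:ℝ) - 1) * ((m:ℝ) - 2) / 6 * t ^ 4 := by ring
    rw [pow_succ (1 + t) m]
    push_cast
    nlinarith [key, mul_nonneg h3 h4, h2]

set_option maxHeartbeats 1000000 in
theorem stmt_3 (x : ℝ) (hx : 0 ≤ x) (n : ℕ) (hn : 1 ≤ n) :
    |(1 + x / n) ^ (-(n : ℝ)) - Real.exp (-x)| ≤ 2 / n := by
  have hn0 : (0:ℝ) < n := by exact_mod_cast hn
  set t : ℝ := x / n with ht
  have ht0 : 0 ≤ t := div_nonneg hx hn0.le
  have hb : (0:ℝ) < 1 + t := by linarith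
  have hx_eq : (n:ℝ) * t = x := by rw [ht]; field_simp
  have hA : (1 + t) ^ (-(n:ℝ)) = ((1 + t) ^ n)⁻¹ := by
    rw [Real.rpow_neg hb.le, Real.rpow_natCast]
  have hBpos : (0:ℝ) < (1 + t) ^ n := pow_pos hb n
  have hBern : 1 + (n:ℝ) * t ≤ (1 + t) ^ n := one_add_mul_le_pow (by linarith) n
  have hB1 : (1:ℝ) ≤ (1 + t) ^ n := by nlinarith
  have hBexp : (1 + t) ^ n ≤ Real.exp x := by
    have h1 : 1 + t ≤ Real.exp t := by linarith [Real.add_one_le_exp t]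
    calc (1 + t) ^ n ≤ (Real.exp t) ^ n := pow_le_pow_left₀ hb.le h1 n
      _ = Real.exp ((n:ℝ) * t) := (Real.exp_nat_mul t n).symm
      _ = Real.exp x := by rw [hx_eq]
  have hd0 : Real.exp (-x) ≤ ((1 + t) ^ n)⁻¹ := by
    rw [Real.exp_neg]
    exact inv_anti₀ hBpos hBexp
  rw [hA, abs_of_nonneg (by linarith)]
  rcases le_or_gt x (n:ℝ) with hxn | hxn
  · rcases le_or_gt 3 n with h3 | h3
    · -- main case : n ≥ 3, x ≤ n
      have hn3 : (3:ℝ) ≤ (n:ℝ) := by exact_mod_cast h3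
      have ht1 : t ≤ 1 := by
        rw [ht, div_le_one hn0]; exact hxn
      -- e^{-x} * B ≥ 1 - x^2/n
      have e1 : 1 - t ^ 2 ≤ Real.exp (-t) * (1 + t) := by
        have h := Real.add_one_le_exp (-t)
        nlinarith [Real.exp_pos (-t)]
      have e2 : (1 - t ^ 2) ^ n ≤ (Real.exp (-t) * (1 + t)) ^ n :=
        pow_le_pow_left₀ (by nlinarith) e1 n
      have e3 : 1 - (n:ℝ) * t ^ 2 ≤ (1 - t ^ 2) ^ n := by
        have h := one_add_mul_le_pow (a := -t ^ 2) (by nlinarith) n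
        have h1 : 1 + (n:ℝ) * (-t ^ 2) = 1 - (n:ℝ) * t ^ 2 := by ring
        rw [h1] at h
        have h2 : (1 + -t ^ 2) = (1 - t ^ 2) := by ring
        rwa [h2] at h
      have e4 : (Real.exp (-t) * (1 + t)) ^ n = Real.exp (-x) * (1 + t) ^ n := by
        rw [mul_pow, ← Real.exp_nat_mul]
        congr 1
        rw [← hx_eq]; ring
      have e5 : (n:ℝ) * t ^ 2 = x ^ 2 / n := by
        rw [ht]; field_simp
      have hkey : 1 - x ^ 2 / n ≤ Real.exp (-x) * (1 + t) ^ n := by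
        rw [← e5, ← e4]; linarith
      -- x^2 ≤ 2 * B
      have hb3 := aux_binom t ht0 n
      have c2 : x ^ 2 / 3 ≤ (n:ℝ) * ((n:ℝ) - 1) / 2 * t ^ 2 := by
        have e : (n:ℝ) * ((n:ℝ) - 1) / 2 * t ^ 2 = ((n:ℝ) - 1) * x ^ 2 / (2 * n) := by
          rw [ht]; field_simp
        rw [e, div_le_div_iff₀ (by norm_num) (by linarith)]
        nlinarith [sq_nonneg x]
      have c3 : x ^ 3 / 27 ≤ (n:ℝ) * ((n:ℝ) - 1) * ((n:ℝ) - 2) / 6 * t ^ 3 := by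
        have e : (n:ℝ) * ((n:ℝ) - 1) * ((n:ℝ) - 2) / 6 * t ^ 3
            = ((n:ℝ) - 1) * ((n:ℝ) - 2) * x ^ 3 / (6 * n ^ 2) := by
          rw [ht]; field_simp
        rw [e, div_le_div_iff₀ (by norm_num) (by positivity)]
        have hx3 : (0:ℝ) ≤ x ^ 3 := by positivity
        nlinarith [mul_nonneg hx3 (mul_nonneg (by linarith : (0:ℝ) ≤ (n:ℝ) - 3)
          (by linarith : (0:ℝ) ≤ 7 * (n:ℝ) - 6))]
      have hx2B : x ^ 2 ≤ 2 * (1 + t) ^ n := by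
        have hlb : 1 + x + x ^ 2 / 3 + x ^ 3 / 27 ≤ (1 + t) ^ n := by
          linarith [hb3, c2, c3, hx_eq]
        nlinarith [mul_nonneg hx (sq_nonneg (x - 3)), hlb]
      -- conclude
      have hfactor : ((1 + t) ^ n)⁻¹ - Real.exp (-x)
          = ((1 + t) ^ n)⁻¹ * (1 - Real.exp (-x) * (1 + t) ^ n) := by
        field_simp
      rw [hfactor]
      have h6 : ((1 + t) ^ n)⁻¹ * (1 - Real.exp (-x) * (1 + t) ^ n)
          ≤ ((1 + t) ^ n)⁻¹ * (x ^ 2 / n) := by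
        apply mul_le_mul_of_nonneg_left _ (inv_nonneg.mpr hBpos.le)
        linarith
      have h7 : ((1 + t) ^ n)⁻¹ * (x ^ 2 / n) ≤ 2 / n := by
        rw [inv_mul_eq_div, div_div, div_le_div_iff₀ (by positivity) hn0]
        nlinarith [mul_le_mul_of_nonneg_right hx2B hn0.le]
      linarith
    · -- n ≤ 2 : trivial since difference ≤ 1 ≤ 2/n
      have hn2 : (n:ℝ) ≤ 2 := by exact_mod_cast Nat.lt_succ_iff.mp h3
      have hinv : ((1 + t) ^ n)⁻¹ ≤ 1 := inv_le_one_of_one_le₀ hB1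
      have hE : 0 < Real.exp (-x) := Real.exp_pos _
      have h12 : (1:ℝ) ≤ 2 / n := by
        rw [le_div_iff₀ hn0]; linarith
      linarith
  · -- x > n : difference ≤ 1/(1+x) ≤ 2/n
    have h1 : ((1 + t) ^ n)⁻¹ ≤ (1 + x)⁻¹ := by
      apply inv_anti₀ (by linarith)
      linarith [hBern, hx_eq]
    have h2 : (1 + x)⁻¹ ≤ 2 / n := by
      rw [inv_eq_one_div, div_le_div_iff₀ (by linarith) hn0]
      linarith
    have hE : 0 < Real.exp (-x) := Real.exp_pos _
    linarith
end

section
/- For all real x ≥ 0 and all real z with 0 < z ≤ 1 and all real a > 1, one has ((a−1)/(a+z))^(a−1) · ((1+z)/(1+z/a))^(1+z) ≤ 1. -/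
theorem stmt_8 (x z a : ℝ) (hx : 0 ≤ x) (hz0 : 0 < z) (hz1 : z ≤ 1) (ha : 1 < a) :
    ((a - 1) / (a + z)) ^ (a - 1) * ((1 + z) / (1 + z / a)) ^ (1 + z) ≤ 1 := by
  have hp : (0:ℝ) < a - 1 := by linarith
  have hq : (0:ℝ) < 1 + z := by linarith
  have hs : (0:ℝ) < a + z := by linarith
  have ha0 : (0:ℝ) < a := by linarith
  have hb2 : 1 + z / a = (a + z) / a := by field_simp
  have hb2pos : (0:ℝ) < 1 + z / a := by positivity
  -- key inequality 1: log((1+z)*a/(a+z)) ≤ (a-1)*z/(a+z)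
  have h1 : Real.log ((1 + z) * a / (a + z)) ≤ (a - 1) * z / (a + z) := by
    have hpos : (0:ℝ) < (1 + z) * a / (a + z) := by positivity
    have h := Real.log_le_sub_one_of_pos hpos
    have heq : (1 + z) * a / (a + z) - 1 = (a - 1) * z / (a + z) := by
      field_simp
      ring
    linarith [heq ▸ h]
  -- key inequality 2: (1+z)/(a+z) ≤ log((a+z)/(a-1))
  have h2 : (1 + z) / (a + z) ≤ Real.log ((a + z) / (a - 1)) := by
    have hpos : (0:ℝ) < (a - 1) / (a + z) := by positivity
    have h := Real.log_le_sub_one_of_pos hpos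
    have hinv : Real.log ((a - 1) / (a + z)) = - Real.log ((a + z) / (a - 1)) := by
      rw [← Real.log_inv]
      congr 1
      field_simp
    have heq : (a - 1) / (a + z) - 1 = -((1 + z) / (a + z)) := by
      field_simp
      ring
    rw [hinv, heq] at h
    linarith
  -- expand logs
  rw [Real.log_div (by positivity) hs.ne'] at h1
  rw [Real.log_mul hq.ne' ha0.ne'] at h1
  rw [Real.log_div hs.ne' hp.ne'] at h2
  -- final combination
  rw [Real.rpow_def_of_pos (by positivity), Real.rpow_def_of_pos (by positivity),
    ← Real.exp_add]
  have : Real.log ((a - 1) / (a + z)) * (a - 1) +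
      Real.log ((1 + z) / (1 + z / a)) * (1 + z) ≤ 0 := by
    rw [Real.log_div hp.ne' hs.ne', hb2, Real.log_div hq.ne' (by positivity),
      Real.log_div hs.ne' ha0.ne']
    have hzle : (1 + z) * ((a - 1) * z / (a + z)) ≤ (a - 1) * ((1 + z) / (a + z)) := by
      rw [← mul_div_assoc, ← mul_div_assoc, div_le_div_iff₀ hs hs]
      nlinarith [mul_pos hp hq, mul_pos (mul_pos hp hq) hs]
    nlinarith [mul_le_mul_of_nonneg_left h1 hq.le, mul_le_mul_of_nonneg_left h2 hp.le]
  calc Real.exp (Real.log ((a - 1) / (a + z)) * (a - 1) +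
      Real.log ((1 + z) / (1 + z / a)) * (1 + z)) ≤ Real.exp 0 := Real.exp_le_exp.mpr this
    _ = 1 := Real.exp_zero
end

section
/- For fixed 0 < z ≤ 1, the function f(a) = (a−1)·log(a−1) − (a−1)·log(a+z) + (1+z)·log(1+z) − (1+z)·log(1 + z/a), defined for a > 1, is convex: its second derivative f''(a) = −(z+1)(az − z − a)/(a²(a−1)(z+a)) is nonnegative for all a > 1. -/
open Real Set

theorem stmt_9 (z : ℝ) (hz0 : 0 < z) (hz1 : z ≤ 1) :
    ConvexOn ℝ (Set.Ioi (1 : ℝ))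
      (fun a : ℝ => (a - 1) * Real.log (a - 1) - (a - 1) * Real.log (a + z)
        + (1 + z) * Real.log (1 + z) - (1 + z) * Real.log (1 + z / a)) ∧
    ∀ a : ℝ, 1 < a →
      0 ≤ -((z + 1) * (a * z - z - a)) / (a ^ 2 * (a - 1) * (z + a)) := by
  constructor
  · set g : ℝ → ℝ := fun a => (a - 1) * Real.log (a - 1) - (a + z) * Real.log (a + z)
        + (1 + z) * Real.log a + (1 + z) * Real.log (1 + z) with hg
    have hd : ∀ a ∈ Ioi (1:ℝ), HasDerivAt g
        (Real.log (a - 1) - Real.log (a + z) + (1 + z) / a) a := by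
      intro a ha
      have ha1 : (1:ℝ) < a := ha
      have h1 : a - 1 ≠ 0 := by linarith
      have h2 : a + z ≠ 0 := by linarith
      have h3 : a ≠ 0 := by linarith
      have H1 : HasDerivAt (fun a : ℝ => (a - 1) * Real.log (a - 1))
          (Real.log (a - 1) + 1) a := by
        have := ((hasDerivAt_id a).sub_const 1).mul
          (((Real.hasDerivAt_log h1).comp a ((hasDerivAt_id a).sub_const 1)))
        refine this.congr_deriv ?_
        field_simp
        simp only [Function.comp_apply, id]
        ring
      have H2 : HasDerivAt (fun a : ℝ => (a + z) * Real.log (a + z))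
          (Real.log (a + z) + 1) a := by
        have := ((hasDerivAt_id a).add_const z).mul
          (((Real.hasDerivAt_log h2).comp a ((hasDerivAt_id a).add_const z)))
        refine this.congr_deriv ?_
        field_simp
        simp only [Function.comp_apply, id]
        ring
      have H3 : HasDerivAt (fun a : ℝ => (1 + z) * Real.log a) ((1 + z) / a) a := by
        have := (Real.hasDerivAt_log h3).const_mul (1 + z)
        refine this.congr_deriv ?_
        try field_simp
        try ring
      have := (((H1.sub H2).add H3).add_const ((1 + z) * Real.log (1 + z)))
      refine this.congr_deriv ?_
      ring
    have hd' : ∀ a ∈ Ioi (1:ℝ),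
        HasDerivAt (fun a => Real.log (a - 1) - Real.log (a + z) + (1 + z) / a)
        (1 / (a - 1) - 1 / (a + z) - (1 + z) / a ^ 2) a := by
      intro a ha
      have ha1 : (1:ℝ) < a := ha
      have h1 : a - 1 ≠ 0 := by linarith
      have h2 : a + z ≠ 0 := by linarith
      have h3 : a ≠ 0 := by linarith
      have H1 := (Real.hasDerivAt_log h1).comp a ((hasDerivAt_id a).sub_const 1)
      have H2 := (Real.hasDerivAt_log h2).comp a ((hasDerivAt_id a).add_const z)
      have H3 : HasDerivAt (fun a : ℝ => (1 + z) / a) ((1 + z) * -(a ^ 2)⁻¹) a := by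
        simpa [div_eq_mul_inv] using (hasDerivAt_inv h3).const_mul (1 + z)
      have := (H1.sub H2).add H3
      refine this.congr_deriv ?_
      field_simp
      ring
    have hgc : ConvexOn ℝ (Set.Ioi (1 : ℝ)) g := by
      apply convexOn_of_hasDerivWithinAt2_nonneg
        (f' := fun a => Real.log (a - 1) - Real.log (a + z) + (1 + z) / a)
        (f'' := fun a => 1 / (a - 1) - 1 / (a + z) - (1 + z) / a ^ 2) (convex_Ioi 1)
      · exact fun a ha => (hd a ha).continuousAt.continuousWithinAt
      · intro a ha
        rw [interior_Ioi] at ha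
        exact (hd a ha).hasDerivWithinAt
      · intro a ha
        rw [interior_Ioi] at ha
        exact (hd' a ha).hasDerivWithinAt
      · intro a ha
        rw [interior_Ioi] at ha
        have ha1 : (1:ℝ) < a := ha
        have key : 1 / (a - 1) - 1 / (a + z) - (1 + z) / a ^ 2
            = (1 + z) * (a + z - a * z) / ((a - 1) * (a + z) * a ^ 2) := by
          have h1 : a - 1 ≠ 0 := by linarith
          have h2 : a + z ≠ 0 := by linarith
          have h3 : a ≠ 0 := by linarith
          field_simp
          ring
        rw [key]
        have h4 : 0 ≤ a * (1 - z) := mul_nonneg (by linarith) (by linarith)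
        apply div_nonneg
        · nlinarith
        · exact mul_nonneg (mul_nonneg (by linarith) (by linarith)) (by positivity)
    exact hgc.congr (fun a ha => by
      have ha1 : (1:ℝ) < a := ha
      have h3 : a ≠ 0 := by linarith
      have hlog : Real.log (1 + z / a) = Real.log (a + z) - Real.log a := by
        rw [show (1 : ℝ) + z / a = (a + z) / a by field_simp]
        exact Real.log_div (by positivity) h3
      simp only [hg, hlog]
      ring)
  · intro a ha
    have h4 : 0 ≤ a * (1 - z) := mul_nonneg (by linarith) (by linarith)
    apply div_nonneg
    · nlinarith
    · exact mul_nonneg (mul_nonneg (by positivity) (by linarith)) (by linarith)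
end

section
/- For fixed 0 < z ≤ 1, the function g(a) = log(a−1) − log(z+a) + (1+z)/a, defined for a > 1, satisfies lim_{a→∞} g(a) = 0, and since g is increasing on (1,∞), g(a) ≤ 0 for all a > 1. -/
open Filter Real

theorem stmt_10 (z : ℝ) (hz0 : 0 < z) (hz1 : z ≤ 1) :
    Filter.Tendsto
      (fun a : ℝ => Real.log (a - 1) - Real.log (z + a) + (1 + z) / a)
      Filter.atTop (nhds 0) ∧
    MonotoneOn
      (fun a : ℝ => Real.log (a - 1) - Real.log (z + a) + (1 + z) / a)
      (Set.Ioi (1 : ℝ)) ∧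
    ∀ a : ℝ, 1 < a →
      Real.log (a - 1) - Real.log (z + a) + (1 + z) / a ≤ 0 := by
  set g : ℝ → ℝ := fun a => Real.log (a - 1) - Real.log (z + a) + (1 + z) / a with hg
  -- limit
  have h0 : Tendsto (fun a : ℝ => 1 / a) atTop (nhds 0) := by
    simpa [one_div] using tendsto_inv_atTop_zero
  have h1 : Tendsto (fun a : ℝ => (a - 1) / (z + a)) atTop (nhds 1) := by
    have heq : (fun a : ℝ => (a - 1) / (z + a)) =ᶠ[atTop]
        fun a => (1 - 1 / a) / (z * (1 / a) + 1) := by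
      filter_upwards [eventually_gt_atTop (0 : ℝ)] with a ha
      have ha' : a ≠ 0 := ne_of_gt ha
      field_simp
    rw [tendsto_congr' heq]
    have : Tendsto (fun a : ℝ => (1 - 1 / a) / (z * (1 / a) + 1)) atTop
        (nhds ((1 - 0) / (z * 0 + 1))) := by
      apply Tendsto.div
      · exact tendsto_const_nhds.sub h0
      · exact (tendsto_const_nhds.mul h0).add tendsto_const_nhds
      · simp
    simpa using this
  have hlog : Tendsto (fun a : ℝ => Real.log ((a - 1) / (z + a))) atTop (nhds 0) := by
    have := (Real.continuousAt_log one_ne_zero).tendsto.comp h1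
    simpa [Function.comp_def] using this
  have h2 : Tendsto (fun a : ℝ => (1 + z) / a) atTop (nhds 0) :=
    Tendsto.div_atTop tendsto_const_nhds tendsto_id
  have htend : Tendsto g atTop (nhds 0) := by
    have heq : g =ᶠ[atTop] fun a => Real.log ((a - 1) / (z + a)) + (1 + z) / a := by
      filter_upwards [eventually_gt_atTop (1 : ℝ)] with a ha
      have h1' : a - 1 ≠ 0 := ne_of_gt (by linarith)
      have h2' : z + a ≠ 0 := ne_of_gt (by linarith)
      simp [hg, Real.log_div h1' h2']
    rw [tendsto_congr' heq]
    simpa using hlog.add h2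
  -- derivative
  have hd : ∀ x ∈ Set.Ioi (1 : ℝ), HasDerivAt g
      ((x - 1)⁻¹ - (z + x)⁻¹ + (1 + z) * (-(x ^ 2)⁻¹)) x := by
    intro x hx
    have hx1 : (1 : ℝ) < x := hx
    have hx0 : (0 : ℝ) < x := by linarith
    have d1 : HasDerivAt (fun a : ℝ => Real.log (a - 1)) (x - 1)⁻¹ x := by
      have := (Real.hasDerivAt_log (ne_of_gt (by linarith : (0:ℝ) < x - 1))).comp x
        ((hasDerivAt_id x).sub_const 1)
      simpa [Function.comp_def] using this
    have d2 : HasDerivAt (fun a : ℝ => Real.log (z + a)) (z + x)⁻¹ x := by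
      have := (Real.hasDerivAt_log (ne_of_gt (by linarith : (0:ℝ) < z + x))).comp x
        ((hasDerivAt_id x).const_add z)
      simpa [Function.comp_def] using this
    have d3 : HasDerivAt (fun a : ℝ => (1 + z) / a) ((1 + z) * (-(x ^ 2)⁻¹)) x := by
      have := (hasDerivAt_inv (ne_of_gt hx0)).const_mul (1 + z)
      simpa [div_eq_mul_inv, mul_comm] using this
    exact (d1.sub d2).add d3
  have hmono : MonotoneOn g (Set.Ioi (1 : ℝ)) := by
    have hs : StrictMonoOn g (Set.Ioi (1 : ℝ)) := by
      apply strictMonoOn_of_deriv_pos (convex_Ioi 1)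
      · intro x hx
        exact (hd x hx).continuousAt.continuousWithinAt
      · intro x hx
        rw [interior_Ioi] at hx
        have hx1 : (1 : ℝ) < x := hx
        have hx0 : (0 : ℝ) < x := by linarith
        rw [(hd x hx).deriv]
        have key : (x - 1)⁻¹ - (z + x)⁻¹ + (1 + z) * (-(x ^ 2)⁻¹)
            = ((1 + z) * (x * (1 - z) + z)) / ((x - 1) * (z + x) * x ^ 2) := by
          have e1 : x - 1 ≠ 0 := ne_of_gt (by linarith)
          have e2 : z + x ≠ 0 := ne_of_gt (by linarith)
          have e3 : x ≠ 0 := ne_of_gt hx0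
          field_simp
          ring
        rw [key]
        have hnum : 0 < x * (1 - z) + z := by nlinarith
        have h1' : (0:ℝ) < x - 1 := by linarith
        have h2' : (0:ℝ) < z + x := by linarith
        positivity
    exact hs.monotoneOn
  refine ⟨htend, hmono, fun a ha => ?_⟩
  have : g a ≤ 0 := by
    apply ge_of_tendsto htend
    filter_upwards [eventually_ge_atTop a, eventually_gt_atTop (1 : ℝ)] with b hb hb1
    exact hmono ha hb1 hb
  simpa [hg] using this
end

section
/- For all real y ∈ (0,1) and all real a, m ≥ 1, one has (1 − y^m)^(a−1) · y^(m+1) ≤ a^(−1−1/m). -/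
lemma aux_amgm_11 (t s b : ℝ) (ht0 : 0 < t) (ht1 : t < 1) (hs : 0 < s) (hb : 0 < b) :
    (1 - t) ^ s * t ^ b ≤ (s / (s + b)) ^ s * (b / (s + b)) ^ b := by
  have hsb : 0 < s + b := by linarith
  have h1t : 0 < 1 - t := by linarith
  have hw : s / (s + b) + b / (s + b) = 1 := by field_simp
  have key := Real.geom_mean_le_arith_mean2_weighted
    (by positivity : (0:ℝ) ≤ s / (s + b)) (by positivity : (0:ℝ) ≤ b / (s + b))
    (by positivity : (0:ℝ) ≤ (1 - t) * ((s + b) / s)) (by positivity : (0:ℝ) ≤ t * ((s + b) / b)) hw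
  have hsum : s / (s + b) * ((1 - t) * ((s + b) / s)) + b / (s + b) * (t * ((s + b) / b)) = 1 := by
    field_simp
    ring
  rw [hsum] at key
  -- raise both sides to power (s+b)
  have key2 : (((1 - t) * ((s + b) / s)) ^ (s / (s + b)) * (t * ((s + b) / b)) ^ (b / (s + b)))
      ^ (s + b) ≤ 1 := by
    have h0 : (0:ℝ) ≤ ((1 - t) * ((s + b) / s)) ^ (s / (s + b)) * (t * ((s + b) / b)) ^ (b / (s + b)) := by
      positivity
    exact Real.rpow_le_one h0 key hsb.le
  have e1 : (((1 - t) * ((s + b) / s)) ^ (s / (s + b))) ^ (s + b) = ((1 - t) * ((s + b) / s)) ^ s := by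
    rw [← Real.rpow_mul (by positivity)]
    congr 1
    field_simp
  have e2 : ((t * ((s + b) / b)) ^ (b / (s + b))) ^ (s + b) = (t * ((s + b) / b)) ^ b := by
    rw [← Real.rpow_mul (by positivity)]
    congr 1
    field_simp
  rw [Real.mul_rpow (by positivity) (by positivity), e1, e2,
      Real.mul_rpow h1t.le (by positivity), Real.mul_rpow ht0.le (by positivity)] at key2
  -- key2 : (1-t)^s * ((s+b)/s)^s * (t^b * ((s+b)/b)^b) ≤ 1
  have c1 : ((s + b) / s) ^ s * (s / (s + b)) ^ s = 1 := by
    rw [← Real.mul_rpow (by positivity) (by positivity)]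
    rw [show (s + b) / s * (s / (s + b)) = 1 by field_simp]
    exact Real.one_rpow s
  have c2 : ((s + b) / b) ^ b * (b / (s + b)) ^ b = 1 := by
    rw [← Real.mul_rpow (by positivity) (by positivity)]
    rw [show (s + b) / b * (b / (s + b)) = 1 by field_simp]
    exact Real.one_rpow b
  have hR : (0:ℝ) ≤ (s / (s + b)) ^ s * (b / (s + b)) ^ b := by positivity
  calc (1 - t) ^ s * t ^ b
      = (1 - t) ^ s * t ^ b * ((((s + b) / s) ^ s * (s / (s + b)) ^ s)
          * (((s + b) / b) ^ b * (b / (s + b)) ^ b)) := by rw [c1, c2]; ring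
    _ = ((1 - t) ^ s * ((s + b) / s) ^ s * (t ^ b * ((s + b) / b) ^ b))
          * ((s / (s + b)) ^ s * (b / (s + b)) ^ b) := by ring
    _ ≤ 1 * ((s / (s + b)) ^ s * (b / (s + b)) ^ b) := mul_le_mul_of_nonneg_right key2 hR
    _ = (s / (s + b)) ^ s * (b / (s + b)) ^ b := one_mul _

lemma aux_scalar_11 (s b : ℝ) (hs : 0 < s) (hb1 : 1 ≤ b) (hb2 : b ≤ 2) :
    (s / (s + b)) ^ s * (b / (s + b)) ^ b ≤ (s + 1) ^ (-b) := by
  have hb0 : (0:ℝ) < b := by linarith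
  have hsb : (0:ℝ) < s + b := by linarith
  have hs1 : (0:ℝ) < s + 1 := by linarith
  have hL : (0:ℝ) < (s / (s + b)) ^ s * (b / (s + b)) ^ b := by positivity
  have hRpos : (0:ℝ) < (s + 1) ^ (-b) := Real.rpow_pos_of_pos hs1 _
  rw [← Real.exp_log hL, ← Real.exp_log hRpos]
  apply Real.exp_le_exp.mpr
  rw [Real.log_mul (by positivity) (by positivity),
      Real.log_rpow (by positivity), Real.log_rpow (by positivity), Real.log_rpow hs1]
  -- goal : s * log (s/(s+b)) + b * log (b/(s+b)) ≤ -b * log (s+1)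
  have hcomb : Real.log (b / (s + b)) + Real.log (s + 1) = Real.log (b / (s + b) * (s + 1)) := by
    rw [Real.log_mul (by positivity) (by positivity)]
  have h1 : Real.log (s / (s + b)) ≤ -b / (s + b) := by
    have h := Real.log_le_sub_one_of_pos (show (0:ℝ) < s / (s + b) by positivity)
    have : s / (s + b) - 1 = -b / (s + b) := by field_simp; ring
    linarith
  have h2 : Real.log (b / (s + b) * (s + 1)) ≤ s * (b - 1) / (s + b) := by
    have h := Real.log_le_sub_one_of_pos (show (0:ℝ) < b / (s + b) * (s + 1) by positivity)
    have : b / (s + b) * (s + 1) - 1 = s * (b - 1) / (s + b) := by field_simp; ring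
    linarith
  have key : s * Real.log (s / (s + b)) + b * Real.log (b / (s + b) * (s + 1)) ≤ 0 := by
    have hA : s * Real.log (s / (s + b)) ≤ s * (-b / (s + b)) :=
      mul_le_mul_of_nonneg_left h1 hs.le
    have hB : b * Real.log (b / (s + b) * (s + 1)) ≤ b * (s * (b - 1) / (s + b)) :=
      mul_le_mul_of_nonneg_left h2 hb0.le
    have hC : s * (-b / (s + b)) + b * (s * (b - 1) / (s + b)) = s * b * (b - 2) / (s + b) := by
      field_simp; ring
    have hD : s * b * (b - 2) / (s + b) ≤ 0 := by
      apply div_nonpos_of_nonpos_of_nonneg _ hsb.le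
      nlinarith [mul_nonneg (mul_pos hs hb0).le (sub_nonneg.mpr hb2)]
    linarith
  rw [← hcomb] at key
  linarith

theorem stmt_11 (y a m : ℝ) (hy0 : 0 < y) (hy1 : y < 1) (ha : 1 ≤ a) (hm : 1 ≤ m) :
    (1 - y ^ m) ^ (a - 1) * y ^ (m + 1) ≤ a ^ (-1 - 1 / m) := by
  have hm0 : (0:ℝ) < m := by linarith
  set t := y ^ m with htdef
  have ht0 : 0 < t := Real.rpow_pos_of_pos hy0 m
  have ht1 : t < 1 := Real.rpow_lt_one hy0.le hy1 hm0
  set b := 1 + 1 / m with hbdef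
  have hb1 : 1 ≤ b := by
    have h01 : 0 < 1 / m := by positivity
    rw [hbdef]; linarith
  have hb2 : b ≤ 2 := by
    have : 1 / m ≤ 1 := by
      rw [div_le_one hm0]; exact hm
    rw [hbdef]; linarith
  have hb0 : 0 < b := by linarith
  have hyp : y ^ (m + 1) = t ^ b := by
    rw [htdef, ← Real.rpow_mul hy0.le]
    congr 1
    rw [hbdef]
    field_simp
  have hae : a ^ (-1 - 1 / m) = ((a - 1) + 1) ^ (-b) := by
    congr 1
    · ring
    · rw [hbdef]; ring
  rw [hyp, hae]
  rcases eq_or_lt_of_le ha with h | h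
  · -- a = 1
    rw [← h]
    rw [show (1:ℝ) - 1 = 0 by norm_num, Real.rpow_zero, one_mul,
        show (0:ℝ) + 1 = 1 by norm_num, Real.one_rpow]
    exact Real.rpow_le_one ht0.le ht1.le hb0.le
  · have hs : 0 < a - 1 := by linarith
    calc (1 - t) ^ (a - 1) * t ^ b
        ≤ ((a - 1) / ((a - 1) + b)) ^ (a - 1) * (b / ((a - 1) + b)) ^ b :=
          aux_amgm_11 t (a - 1) b ht0 ht1 hs hb0
      _ ≤ ((a - 1) + 1) ^ (-b) := aux_scalar_11 (a - 1) b hs hb1 hb2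
end
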